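/- Let g ≥ 2 and β ≥ 1 be integers. For an integer s with 0 ≤ s < β, call a set of natural numbers a 'child range at level s' if it equals {x : m·g^(s+1) + a·g^s ≤ x < m·g^(s+1) + b·g^s} for some integers m ≥ 0 and 0 ≤ a < b ≤ g; such a child range is a 'prefix range' if a = 0 and a 'suffix range' if b = g. Then for all integers ℓ, r with 0 ≤ ℓ < r ≤ g^β, the interval {x : ℓ ≤ x < r} can be written as the union of a pairwise-disjoint family of at most 2β − 1 child ranges at levels 0 ≤ s < β, of which all but at most one are prefix ranges or suffix ranges. -/

import Mathlib

structure MyPiece where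
  s : ℕ
  m : ℕ
  a : ℕ
  b : ℕ

def plo (g : ℕ) (p : MyPiece) : ℕ := p.m * g ^ (p.s + 1) + p.a * g ^ p.s
def phi (g : ℕ) (p : MyPiece) : ℕ := p.m * g ^ (p.s + 1) + p.b * g ^ p.s

def Covers (g : ℕ) : List MyPiece → ℕ → ℕ → Prop
  | [], l, r => l = r
  | p :: L, l, r => plo g p = l ∧ Covers g L (phi g p) r

def PValid (g β : ℕ) (p : MyPiece) : Prop := p.s < β ∧ p.a < p.b ∧ p.b ≤ g

def nonPS (g : ℕ) (p : MyPiece) : Bool := !(p.a == 0 || p.b == g)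

lemma plo_lt_phi {g β : ℕ} (hg : 0 < g) {p : MyPiece} (hv : PValid g β p) :
    plo g p < phi g p := by
  unfold plo phi
  have : 0 < g ^ p.s := pow_pos hg _
  have := hv.2.1
  have : p.a * g ^ p.s < p.b * g ^ p.s :=
    (Nat.mul_lt_mul_right (pow_pos hg _)).mpr hv.2.1
  omega

lemma covers_append {g : ℕ} : ∀ {L1 L2 : List MyPiece} {l m r : ℕ},
    Covers g L1 l m → Covers g L2 m r → Covers g (L1 ++ L2) l r := by
  intro L1
  induction L1 with
  | nil => intro L2 l m r h1 h2; cases h1; simpa using h2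
  | cons p t ih =>
    intro L2 l m r h1 h2
    exact ⟨h1.1, ih h1.2 h2⟩

lemma covers_le {g β : ℕ} (hg : 0 < g) : ∀ {L : List MyPiece} {l r : ℕ},
    Covers g L l r → (∀ p ∈ L, PValid g β p) → l ≤ r := by
  intro L
  induction L with
  | nil => intro l r h _; exact h.le
  | cons p t ih =>
    intro l r h hv
    have h0 := h.1
    have h1 := plo_lt_phi hg (hv p (by simp))
    have h2 := ih h.2 (fun q hq => hv q (by simp [hq]))
    omega

lemma covers_lo {g β : ℕ} (hg : 0 < g) : ∀ {L : List MyPiece} {l r : ℕ},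
    Covers g L l r → (∀ p ∈ L, PValid g β p) → ∀ q ∈ L, l ≤ plo g q := by
  intro L
  induction L with
  | nil => intro l r _ _ q hq; simp at hq
  | cons p t ih =>
    intro l r h hv q hq
    rcases List.mem_cons.mp hq with rfl | hq
    · exact h.1.ge
    · have h0 := h.1
      have h1 := plo_lt_phi hg (hv p (by simp))
      have := ih h.2 (fun q hq => hv q (by simp [hq])) q hq
      omega

lemma covers_pairwise {g β : ℕ} (hg : 0 < g) : ∀ {L : List MyPiece} {l r : ℕ},
    Covers g L l r → (∀ p ∈ L, PValid g β p) →
    List.Pairwise (fun p q => phi g p ≤ plo g q) L := by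
  intro L
  induction L with
  | nil => intro l r _ _; exact List.Pairwise.nil
  | cons p t ih =>
    intro l r h hv
    refine List.Pairwise.cons ?_ (ih h.2 (fun q hq => hv q (by simp [hq])))
    intro q hq
    exact covers_lo hg h.2 (fun q hq => hv q (by simp [hq])) q hq

lemma covers_union {g β : ℕ} (hg : 0 < g) : ∀ (L : List MyPiece) (l r : ℕ),
    Covers g L l r → (∀ p ∈ L, PValid g β p) →
    Set.Ico l r = ⋃ i : Fin L.length, Set.Ico (plo g (L.get i)) (phi g (L.get i)) := by
  intro L
  induction L with
  | nil =>
    intro l r h _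
    cases h
    simp
  | cons p t ih =>
    intro l r h hv
    have hvt : ∀ q ∈ t, PValid g β q := fun q hq => hv q (by simp [hq])
    have h1 : l ≤ phi g p := by
      have h0 := h.1
      have := plo_lt_phi hg (hv p (by simp)); omega
    have h2 : phi g p ≤ r := covers_le hg h.2 hvt
    have := ih (phi g p) r h.2 hvt
    rw [← Set.Ico_union_Ico_eq_Ico h1 h2, this, ← h.1]
    ext x
    simp [Fin.exists_fin_succ]

lemma countP_le_one_get {α : Type*} (p : α → Bool) : ∀ (L : List α), L.countP p ≤ 1 →
    ∀ i j : Fin L.length, p (L.get i) → p (L.get j) → i = j := by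
  intro L
  induction L with
  | nil => intro _ i; exact i.elim0
  | cons a t ih =>
    intro h i j hi hj
    induction i using Fin.cases with
    | zero =>
      induction j using Fin.cases with
      | zero => rfl
      | succ j' =>
        exfalso
        simp at hi hj
        have h2 : 0 < t.countP p :=
          List.countP_pos_iff.mpr ⟨t.get j', List.mem_iff_get.mpr ⟨j', rfl⟩, hj⟩
        rw [List.countP_cons, hi, if_pos rfl] at h
        omega
    | succ i' =>
      induction j using Fin.cases with
      | zero =>
        exfalso
        simp at hi hj
        have h2 : 0 < t.countP p :=
          List.countP_pos_iff.mpr ⟨t.get i', List.mem_iff_get.mpr ⟨i', rfl⟩, hi⟩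
        rw [List.countP_cons, hj, if_pos rfl] at h
        omega
      | succ j' =>
        simp at hi hj
        have hle : t.countP p ≤ (a :: t).countP p := by
          rw [List.countP_cons]; exact Nat.le_add_right _ _
        have ht : t.countP p ≤ 1 := le_trans hle h
        have := ih ht i' j' hi hj
        simp [this]

lemma lt_div_succ_mul (l G : ℕ) (hG : 0 < G) : l < (l / G + 1) * G := by
  rw [add_mul, one_mul]
  have h := Nat.div_add_mod l G
  have h2 := Nat.mod_lt l hG
  have h3 : l / G * G = G * (l / G) := mul_comm _ _
  omega


lemma suffixCover {g : ℕ} (hg : 2 ≤ g) : ∀ β, 1 ≤ β → ∀ c l,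
    c * g ^ β ≤ l → l < (c + 1) * g ^ β →
    ∃ L : List MyPiece, Covers g L l ((c + 1) * g ^ β) ∧ L.length ≤ β ∧
      ∀ p ∈ L, PValid g β p ∧ p.b = g := by
  have hg0 : 0 < g := by omega
  intro β hβ
  induction β, hβ using Nat.le_induction with
  | base =>
    intro c l h1 h2
    rw [pow_one] at h1 h2
    rw [add_mul, one_mul] at h2
    refine ⟨[⟨0, c, l - c * g, g⟩], ⟨?_, ?_⟩, by simp, ?_⟩
    · show c * g ^ (0 + 1) + (l - c * g) * g ^ 0 = l
      rw [pow_one, pow_zero]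
      omega
    · show c * g ^ (0 + 1) + g * g ^ 0 = (c + 1) * g ^ 1
      rw [pow_one, pow_zero]
      ring
    · intro p hp
      simp only [List.mem_singleton] at hp
      subst hp
      refine ⟨⟨Nat.one_pos, ?_, le_rfl⟩, rfl⟩
      show l - c * g < g
      omega
  | succ β hβ ih =>
    intro c l h1 h2
    have hG : 0 < g ^ β := pow_pos hg0 _
    have hpow : g ^ (β + 1) = g ^ β * g := pow_succ g β
    set A := l / g ^ β with hA
    have hA1 : A * g ^ β ≤ l := Nat.div_mul_le_self l _
    have hA2 : l < (A + 1) * g ^ β := lt_div_succ_mul l _ hG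
    have hA3 : c * g ≤ A := by
      rw [hA, Nat.le_div_iff_mul_le hG]
      calc c * g * g ^ β = c * (g ^ β * g) := by ring
        _ = c * g ^ (β + 1) := by rw [hpow]
        _ ≤ l := h1
    have hA4 : A < (c + 1) * g := by
      rw [hA, Nat.div_lt_iff_lt_mul hG]
      calc l < (c + 1) * g ^ (β + 1) := h2
        _ = (c + 1) * g * g ^ β := by rw [hpow]; ring
    obtain ⟨L1, hC1, hL1, hV1⟩ := ih A l hA1 hA2
    by_cases hcase : A + 1 = (c + 1) * g
    · refine ⟨L1, ?_, by omega, ?_⟩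
      · have he : (A + 1) * g ^ β = (c + 1) * g ^ (β + 1) := by
          rw [hcase, hpow]; ring
        rw [← he]; exact hC1
      · intro p hp
        obtain ⟨⟨hs, hab, hbg⟩, hb⟩ := hV1 p hp
        exact ⟨⟨by omega, hab, hbg⟩, hb⟩
    · have hlt : A + 1 < (c + 1) * g := by omega
      have hcg : (c + 1) * g = c * g + g := by ring
      refine ⟨L1 ++ [⟨β, c, A + 1 - c * g, g⟩], ?_, ?_, ?_⟩
      · refine covers_append hC1 ⟨?_, ?_⟩
        · show c * g ^ (β + 1) + (A + 1 - c * g) * g ^ β = (A + 1) * g ^ β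
          rw [hpow]
          have h6 : c * g + (A + 1 - c * g) = A + 1 := by omega
          calc c * (g ^ β * g) + (A + 1 - c * g) * g ^ β
              = (c * g + (A + 1 - c * g)) * g ^ β := by ring
            _ = (A + 1) * g ^ β := by rw [h6]
        · show c * g ^ (β + 1) + g * g ^ β = (c + 1) * g ^ (β + 1)
          rw [hpow]; ring
      · simp only [List.length_append, List.length_singleton]
        omega
      · intro p hp
        rcases List.mem_append.mp hp with hp | hp
        · obtain ⟨⟨hs, hab, hbg⟩, hb⟩ := hV1 p hp
          exact ⟨⟨by omega, hab, hbg⟩, hb⟩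
        · simp only [List.mem_singleton] at hp
          subst hp
          refine ⟨⟨by show β < β + 1; omega, ?_, le_rfl⟩, rfl⟩
          show A + 1 - c * g < g
          omega

lemma prefixCover {g : ℕ} (hg : 2 ≤ g) : ∀ β, 1 ≤ β → ∀ c r,
    c * g ^ β < r → r ≤ (c + 1) * g ^ β →
    ∃ L : List MyPiece, Covers g L (c * g ^ β) r ∧ L.length ≤ β ∧
      ∀ p ∈ L, PValid g β p ∧ p.a = 0 := by
  have hg0 : 0 < g := by omega
  intro β hβ
  induction β, hβ using Nat.le_induction with
  | base =>
    intro c r h1 h2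
    rw [pow_one] at h1 h2
    rw [add_mul, one_mul] at h2
    refine ⟨[⟨0, c, 0, r - c * g⟩], ⟨?_, ?_⟩, by simp, ?_⟩
    · show c * g ^ (0 + 1) + 0 * g ^ 0 = c * g ^ 1
      simp
    · show c * g ^ (0 + 1) + (r - c * g) * g ^ 0 = r
      rw [pow_one, pow_zero]
      omega
    · intro p hp
      simp only [List.mem_singleton] at hp
      subst hp
      refine ⟨⟨Nat.one_pos, ?_, ?_⟩, rfl⟩
      · show 0 < r - c * g
        omega
      · show r - c * g ≤ g
        omega
  | succ β hβ ih =>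
    intro c r h1 h2
    have hG : 0 < g ^ β := pow_pos hg0 _
    have hpow : g ^ (β + 1) = g ^ β * g := pow_succ g β
    have hr1 : 1 ≤ r := by omega
    set B := (r - 1) / g ^ β with hB
    have hB1 : B * g ^ β ≤ r - 1 := Nat.div_mul_le_self _ _
    have hB2 : r - 1 < (B + 1) * g ^ β := lt_div_succ_mul _ _ hG
    have hB3 : c * g ≤ B := by
      rw [hB, Nat.le_div_iff_mul_le hG]
      have he : c * g * g ^ β = c * g ^ (β + 1) := by rw [hpow]; ring
      omega
    have hB4 : B < (c + 1) * g := by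
      rw [hB, Nat.div_lt_iff_lt_mul hG]
      have he : (c + 1) * g * g ^ β = (c + 1) * g ^ (β + 1) := by rw [hpow]; ring
      omega
    have hBr1 : B * g ^ β < r := by omega
    have hBr2 : r ≤ (B + 1) * g ^ β := by omega
    obtain ⟨L2, hC2, hL2, hV2⟩ := ih B r hBr1 hBr2
    by_cases hcase : c * g = B
    · have he : c * g ^ (β + 1) = B * g ^ β := by
        rw [hpow, ← hcase]; ring
      refine ⟨L2, by rw [he]; exact hC2, by omega, ?_⟩
      intro p hp
      obtain ⟨⟨hs, hab, hbg⟩, ha⟩ := hV2 p hp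
      exact ⟨⟨by omega, hab, hbg⟩, ha⟩
    · have hlt : c * g < B := by omega
      have hcg : (c + 1) * g = c * g + g := by ring
      have hphi : phi g ⟨β, c, 0, B - c * g⟩ = B * g ^ β := by
        show c * g ^ (β + 1) + (B - c * g) * g ^ β = B * g ^ β
        rw [hpow]
        have h6 : c * g + (B - c * g) = B := by omega
        calc c * (g ^ β * g) + (B - c * g) * g ^ β
            = (c * g + (B - c * g)) * g ^ β := by ring
          _ = B * g ^ β := by rw [h6]
      refine ⟨⟨β, c, 0, B - c * g⟩ :: L2, ⟨?_, ?_⟩, ?_, ?_⟩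
      · show c * g ^ (β + 1) + 0 * g ^ β = c * g ^ (β + 1)
        simp
      · rw [hphi]; exact hC2
      · simp only [List.length_cons]
        omega
      · intro p hp
        rcases List.mem_cons.mp hp with rfl | hp
        · refine ⟨⟨by show β < β + 1; omega, ?_, ?_⟩, rfl⟩
          · show 0 < B - c * g
            omega
          · show B - c * g ≤ g
            omega
        · obtain ⟨⟨hs, hab, hbg⟩, ha⟩ := hV2 p hp
          exact ⟨⟨by omega, hab, hbg⟩, ha⟩

lemma nonPS_false_of_b {g : ℕ} {p : MyPiece} (h : p.b = g) : nonPS g p = false := by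
  simp [nonPS, h]

lemma nonPS_false_of_a {g : ℕ} {p : MyPiece} (h : p.a = 0) : nonPS g p = false := by
  simp [nonPS, h]

lemma nonPS_true {g : ℕ} {p : MyPiece} (h1 : p.a ≠ 0) (h2 : p.b ≠ g) :
    nonPS g p = true := by
  simp [nonPS, h1, h2]

lemma mainCover {g : ℕ} (hg : 2 ≤ g) : ∀ β, 1 ≤ β → ∀ c l r,
    c * g ^ β ≤ l → l < r → r ≤ (c + 1) * g ^ β →
    ∃ L : List MyPiece, Covers g L l r ∧ L.length ≤ 2 * β - 1 ∧
      (∀ p ∈ L, PValid g β p) ∧ L.countP (nonPS g) ≤ 1 := by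
  have hg0 : 0 < g := by omega
  intro β hβ
  induction β, hβ using Nat.le_induction with
  | base =>
    intro c l r h1 hlr h2
    rw [pow_one] at h1 h2
    rw [add_mul, one_mul] at h2
    refine ⟨[⟨0, c, l - c * g, r - c * g⟩], ⟨?_, ?_⟩, by simp, ?_, ?_⟩
    · show c * g ^ (0 + 1) + (l - c * g) * g ^ 0 = l
      rw [pow_one, pow_zero]
      omega
    · show c * g ^ (0 + 1) + (r - c * g) * g ^ 0 = r
      rw [pow_one, pow_zero]
      omega
    · intro p hp
      simp only [List.mem_singleton] at hp
      subst hp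
      refine ⟨Nat.one_pos, ?_, ?_⟩
      · show l - c * g < r - c * g
        omega
      · show r - c * g ≤ g
        omega
    · exact le_trans List.countP_le_length (by simp)
  | succ β hβ ih =>
    intro c l r h1 hlr h2
    have hG : 0 < g ^ β := pow_pos hg0 _
    have hpow : g ^ (β + 1) = g ^ β * g := pow_succ g β
    have hr1 : 1 ≤ r := by omega
    set A := l / g ^ β with hA
    set B := (r - 1) / g ^ β with hB
    have hA1 : A * g ^ β ≤ l := Nat.div_mul_le_self l _
    have hA2 : l < (A + 1) * g ^ β := lt_div_succ_mul l _ hG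
    have hB1 : B * g ^ β ≤ r - 1 := Nat.div_mul_le_self _ _
    have hB2 : r - 1 < (B + 1) * g ^ β := lt_div_succ_mul _ _ hG
    have hA3 : c * g ≤ A := by
      rw [hA, Nat.le_div_iff_mul_le hG]
      have he : c * g * g ^ β = c * g ^ (β + 1) := by rw [hpow]; ring
      omega
    have hB4 : B < (c + 1) * g := by
      rw [hB, Nat.div_lt_iff_lt_mul hG]
      have he : (c + 1) * g * g ^ β = (c + 1) * g ^ (β + 1) := by rw [hpow]; ring
      omega
    have hAB : A ≤ B := by
      rw [hA, hB]
      exact Nat.div_le_div_right (by omega)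
    have hcg : (c + 1) * g = c * g + g := by ring
    by_cases hcase : A = B
    · obtain ⟨L, hC, hlen, hV, hcnt⟩ := ih A l r hA1 hlr (by rw [hcase]; omega)
      refine ⟨L, hC, by omega, ?_, hcnt⟩
      intro p hp
      obtain ⟨hs, hab, hbg⟩ := hV p hp
      exact ⟨by omega, hab, hbg⟩
    · have hABlt : A < B := by omega
      have hBr1 : B * g ^ β < r := by omega
      have hBr2 : r ≤ (B + 1) * g ^ β := by omega
      obtain ⟨L1, hC1, hL1, hV1⟩ := suffixCover hg β hβ A l hA1 hA2
      obtain ⟨L3, hC3, hL3, hV3⟩ := prefixCover hg β hβ B r hBr1 hBr2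
      have hcnt1 : L1.countP (nonPS g) = 0 :=
        List.countP_eq_zero.mpr fun p hp => by
          rw [nonPS_false_of_b (hV1 p hp).2]; simp
      have hcnt3 : L3.countP (nonPS g) = 0 :=
        List.countP_eq_zero.mpr fun p hp => by
          rw [nonPS_false_of_a (hV3 p hp).2]; simp
      by_cases hmid : A + 1 = B
      · refine ⟨L1 ++ L3, covers_append hC1 (by rw [hmid]; exact hC3), ?_, ?_, ?_⟩
        · simp only [List.length_append]
          omega
        · intro p hp
          rcases List.mem_append.mp hp with hp | hp
          · obtain ⟨⟨hs, hab, hbg⟩, _⟩ := hV1 p hp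
            exact ⟨by omega, hab, hbg⟩
          · obtain ⟨⟨hs, hab, hbg⟩, _⟩ := hV3 p hp
            exact ⟨by omega, hab, hbg⟩
        · rw [List.countP_append, hcnt1, hcnt3]
          omega
      · have hmid' : A + 1 < B := by omega
        have hplo : plo g ⟨β, c, A + 1 - c * g, B - c * g⟩ = (A + 1) * g ^ β := by
          show c * g ^ (β + 1) + (A + 1 - c * g) * g ^ β = (A + 1) * g ^ β
          rw [hpow]
          have h6 : c * g + (A + 1 - c * g) = A + 1 := by omega
          calc c * (g ^ β * g) + (A + 1 - c * g) * g ^ β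
              = (c * g + (A + 1 - c * g)) * g ^ β := by ring
            _ = (A + 1) * g ^ β := by rw [h6]
        have hphi : phi g ⟨β, c, A + 1 - c * g, B - c * g⟩ = B * g ^ β := by
          show c * g ^ (β + 1) + (B - c * g) * g ^ β = B * g ^ β
          rw [hpow]
          have h6 : c * g + (B - c * g) = B := by omega
          calc c * (g ^ β * g) + (B - c * g) * g ^ β
              = (c * g + (B - c * g)) * g ^ β := by ring
            _ = B * g ^ β := by rw [h6]
        refine ⟨L1 ++ (⟨β, c, A + 1 - c * g, B - c * g⟩ :: L3),
          covers_append hC1 ⟨hplo, by rw [hphi]; exact hC3⟩, ?_, ?_, ?_⟩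
        · simp only [List.length_append, List.length_cons]
          omega
        · intro p hp
          rcases List.mem_append.mp hp with hp | hp
          · obtain ⟨⟨hs, hab, hbg⟩, _⟩ := hV1 p hp
            exact ⟨by omega, hab, hbg⟩
          · rcases List.mem_cons.mp hp with rfl | hp
            · refine ⟨by show β < β + 1; omega, ?_, ?_⟩
              · show A + 1 - c * g < B - c * g
                omega
              · show B - c * g ≤ g
                omega
            · obtain ⟨⟨hs, hab, hbg⟩, _⟩ := hV3 p hp
              exact ⟨by omega, hab, hbg⟩
        · rw [List.countP_append, hcnt1, List.countP_cons, hcnt3]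
          split <;> omega

/-- The set `{x : m·g^(s+1) + a·g^s ≤ x < m·g^(s+1) + b·g^s}` of natural numbers:
a "child range at level `s`" when `m ≥ 0` and `0 ≤ a < b ≤ g`. -/
def childRange (g s m a b : ℕ) : Set ℕ :=
  {x | m * g ^ (s + 1) + a * g ^ s ≤ x ∧ x < m * g ^ (s + 1) + b * g ^ s}

lemma childRange_eq (g : ℕ) (p : MyPiece) :
    childRange g p.s p.m p.a p.b = Set.Ico (plo g p) (phi g p) := rfl

theorem stmt_3 (g β : ℕ) (hg : 2 ≤ g) (hβ : 1 ≤ β) :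
    ∀ ℓ r : ℕ, ℓ < r → r ≤ g ^ β →
      ∃ (k : ℕ) (s m a b : Fin k → ℕ),
        k ≤ 2 * β - 1 ∧
        (∀ j, s j < β ∧ a j < b j ∧ b j ≤ g) ∧
        ({x | ℓ ≤ x ∧ x < r} = ⋃ j, childRange g (s j) (m j) (a j) (b j)) ∧
        (Pairwise fun j j' : Fin k => Disjoint
          (childRange g (s j) (m j) (a j) (b j))
          (childRange g (s j') (m j') (a j') (b j'))) ∧
        (∀ j j' : Fin k, ¬(a j = 0 ∨ b j = g) → ¬(a j' = 0 ∨ b j' = g) → j = j') := by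
  have hg0 : 0 < g := by omega
  intro l r hlr hr
  obtain ⟨L, hC, hlen, hV, hcnt⟩ :=
    mainCover hg β hβ 0 l r (by simp) hlr (by simpa using hr)
  have hmem : ∀ j : Fin L.length, L.get j ∈ L := fun j =>
    List.mem_iff_get.mpr ⟨j, rfl⟩
  refine ⟨L.length, fun j => (L.get j).s, fun j => (L.get j).m,
    fun j => (L.get j).a, fun j => (L.get j).b, hlen, ?_, ?_, ?_, ?_⟩
  · intro j
    exact hV _ (hmem j)
  · have h := covers_union (β := β) hg0 L l r hC hV
    have h0 : {x | l ≤ x ∧ x < r} = Set.Ico l r := rfl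
    rw [h0, h]
    exact Set.iUnion_congr fun j => (childRange_eq g (L.get j)).symm
  · have hpw := covers_pairwise (β := β) hg0 hC hV
    have hget := List.pairwise_iff_get.mp hpw
    have hdis : ∀ p q : MyPiece, phi g p ≤ plo g q →
        Disjoint (childRange g p.s p.m p.a p.b) (childRange g q.s q.m q.a q.b) := by
      intro p q hpq
      rw [childRange_eq, childRange_eq, Set.disjoint_left]
      intro x hx hx'
      rw [Set.mem_Ico] at hx hx'
      omega
    intro j j' hne
    rcases lt_or_gt_of_ne hne with h | h
    · exact hdis _ _ (hget j j' h)
    · exact (hdis _ _ (hget j' j h)).symm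
  · intro j j' hj hj'
    have hb : ∀ i : Fin L.length, ¬((L.get i).a = 0 ∨ (L.get i).b = g) →
        nonPS g (L.get i) = true := by
      intro i hi
      push_neg at hi
      exact nonPS_true hi.1 hi.2
    exact countP_le_one_get (nonPS g) L hcnt j j' (hb j hj) (hb j' hj')
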